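/- arXiv:1606.07516 — 2 statements merged into one kernel-verified Lean document; each statement's English description precedes it below -/
import Mathlib

section
/- Ring protocol R1 is not correct under push-pull: after the call sequence (1,2), (2,3), ..., (n−1,n) on a directed ring of n ≥ 3 agents starting from the initial situation, agent 1 is familiar only with secrets A₁ and A₂ and is hence not an expert, even though each agent i < n is familiar with exactly the secrets of agents 1,...,i+1. -/
/-- The effect of a push-pull call `(a,b)`: both agents learn the union of their secrets.
Agents `1,…,n` are coded as `0,…,n-1`; agent `x`'s secret is `x`. -/
def pushPullCall (c : ℕ × ℕ) (s : ℕ → Finset ℕ) : ℕ → Finset ℕ :=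
  fun x => if x = c.1 ∨ x = c.2 then s c.1 ∪ s c.2 else s x

/-- Applying a finite list of push-pull calls, in order, to a gossip situation. -/
def runCalls (cs : List (ℕ × ℕ)) (s : ℕ → Finset ℕ) : ℕ → Finset ℕ :=
  cs.foldl (fun t c => pushPullCall c t) s

/-- The call sequence `(1,2), (2,3), …, (n−1,n)` along the ring, in 0-indexed coding. -/
def chainSeq (n : ℕ) : List (ℕ × ℕ) :=
  (List.range (n - 1)).map fun k => (k, k + 1)

/-- The explicit state after `m` chain calls. -/
def chainState (m : ℕ) : ℕ → Finset ℕ :=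
  fun x => if x < m then Finset.range (x + 2) else if x = m then Finset.range (m + 1)
    else {x}

lemma runCalls_chain (m : ℕ) :
    runCalls ((List.range m).map fun k => (k, k + 1)) (fun x => ({x} : Finset ℕ))
      = chainState m := by
  induction m with
  | zero =>
    funext x
    simp [runCalls, chainState]
  | succ m ih =>
    have : (List.range (m + 1)).map (fun k => (k, k + 1))
        = ((List.range m).map fun k => (k, k + 1)) ++ [(m, m + 1)] := by
      rw [List.range_succ, List.map_append]; rfl
    rw [this]
    unfold runCalls at *
    rw [List.foldl_append, ih]
    funext x
    simp only [List.foldl_cons, List.foldl_nil]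
    show pushPullCall (m, m + 1) (chainState m) x = _
    unfold pushPullCall chainState
    by_cases h1 : x = m ∨ x = m + 1
    · rw [if_pos h1]
      have hm : (if m < m then Finset.range (m + 2) else if m = m then Finset.range (m + 1)
          else {m}) = Finset.range (m + 1) := by simp
      have hm1 : (if m + 1 < m then Finset.range (m + 1 + 2)
          else if m + 1 = m then Finset.range (m + 1) else {m + 1}) = {m+1} := by
        rw [if_neg (by omega), if_neg (by omega)]
      rw [hm, hm1]
      have hu : Finset.range (m + 1) ∪ {m + 1} = Finset.range (m + 2) := by
        ext y; simp [Nat.lt_succ_iff_lt_or_eq]; exact or_comm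
      rcases h1 with h | h
      · subst h; rw [if_pos (by omega), hu]
      · subst h; rw [if_neg (by omega), if_pos rfl, hu]
    · rw [if_neg h1]
      push_neg at h1
      by_cases h2 : x < m
      · rw [if_pos h2, if_pos (by omega)]
      · rw [if_neg h2, if_neg h1.1, if_neg (show ¬ x < m + 1 by omega), if_neg h1.2]

/-- After the push-pull call sequence `(1,2), (2,3), …, (n−1,n)` on a directed ring of
`n ≥ 3` agents starting from the initial situation, each agent `i < n` is familiar with
exactly the secrets of agents `1,…,i+1` (the last agent with all secrets), and agent `1`
(coded `0`) is familiar only with the secrets of agents `1` and `2`, hence is not an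
expert. Consequently ring protocol R1 is not correct under push-pull. -/
theorem R1_pushpull_incorrect_computation (n : ℕ) (hn : 3 ≤ n) :
    (∀ i : ℕ, i + 1 < n →
        runCalls (chainSeq n) (fun x => ({x} : Finset ℕ)) i = Finset.range (i + 2)) ∧
    runCalls (chainSeq n) (fun x => ({x} : Finset ℕ)) (n - 1) = Finset.range n ∧
    runCalls (chainSeq n) (fun x => ({x} : Finset ℕ)) 0 = ({0, 1} : Finset ℕ) ∧
    runCalls (chainSeq n) (fun x => ({x} : Finset ℕ)) 0 ≠ Finset.range n := by
  have key : runCalls (chainSeq n) (fun x => ({x} : Finset ℕ)) = chainState (n - 1) :=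
    runCalls_chain (n - 1)
  rw [key]
  have h0 : chainState (n - 1) 0 = ({0, 1} : Finset ℕ) := by
    unfold chainState
    rw [if_pos (by omega)]
    decide
  refine ⟨fun i hi => ?_, ?_, h0, ?_⟩
  · unfold chainState; rw [if_pos (by omega)]
  · unfold chainState
    rw [if_neg (by omega), if_pos rfl]
    congr 1; omega
  · rw [h0]
    intro h
    have : 2 ∈ Finset.range n := Finset.mem_range.mpr (by omega)
    rw [← h] at this
    simp at this
end

section
/- After the push-pull call sequence (1,2), (2,3), ..., (n−1,n), (n,1), (1,2) on a directed ring of n ≥ 5 agents, agent 3 is not familiar with the secret of agent 5; hence protocol R2 is not correct for n ≥ 5. -/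
/-- The call sequence `(1,2), (2,3), …, (n−1,n), (n,1), (1,2)` in 0-indexed coding. -/
def R2Seq (n : ℕ) : List (ℕ × ℕ) :=
  ((List.range (n - 1)).map fun k => (k, k + 1)) ++ [(n - 1, 0), (0, 1)]

lemma runCalls_append (cs ds : List (ℕ × ℕ)) (s : ℕ → Finset ℕ) :
    runCalls (cs ++ ds) s = runCalls ds (runCalls cs s) := by
  simp [runCalls, List.foldl_append]

lemma runCalls_untouched (cs : List (ℕ × ℕ)) (s : ℕ → Finset ℕ) (a : ℕ)
    (h : ∀ c ∈ cs, c.1 ≠ a ∧ c.2 ≠ a) : runCalls cs s a = s a := by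
  induction cs generalizing s with
  | nil => rfl
  | cons c cs ih =>
    have hc := h c List.mem_cons_self
    have : pushPullCall c s a = s a := by
      simp [pushPullCall, hc.1.symm, hc.2.symm]
    rw [runCalls, List.foldl_cons, ← runCalls]
    rw [ih _ (fun d hd => h d (List.mem_cons_of_mem _ hd))]
    exact this

/-- After the push-pull call sequence `(1,2), (2,3), …, (n−1,n), (n,1), (1,2)` on a
directed ring of `n ≥ 5` agents (starting from the initial situation), agent `3`
(coded `2`) is not familiar with the secret of agent `5` (coded `4`); hence ring
protocol R2 is not correct for `n ≥ 5`. -/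
theorem R2_incorrect_for_five_or_more (n : ℕ) (hn : 5 ≤ n) :
    (4 : ℕ) ∉ runCalls (R2Seq n) (fun x => ({x} : Finset ℕ)) 2 := by
  obtain ⟨m, hm⟩ : ∃ m, n - 1 = 3 + m := ⟨n - 4, by omega⟩
  have hsplit : R2Seq n =
      ([(0,1),(1,2),(2,3)] : List (ℕ × ℕ)) ++
      (((List.range m).map fun k => (3 + k, 3 + k + 1)) ++ [(n - 1, 0), (0, 1)]) := by
    unfold R2Seq
    rw [hm, List.range_add, List.map_append, List.map_map, List.append_assoc]
    congr 1
  rw [hsplit, runCalls_append]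
  rw [runCalls_untouched]
  · have : runCalls ([(0,1),(1,2),(2,3)] : List (ℕ × ℕ)) (fun x => ({x} : Finset ℕ)) 2
        = ({0,1,2,3} : Finset ℕ) := by
      simp [runCalls, pushPullCall]
    rw [this]
    decide
  · intro c hc
    simp only [List.mem_append, List.mem_map, List.mem_range] at hc
    rcases hc with ⟨k, _, rfl⟩ | hc
    · constructor <;> omega
    · simp at hc
      rcases hc with rfl | rfl <;> constructor <;> simp <;> omega
end
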